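/- Let u, u' ∈ L²(n) ∩ L^∞(n), and for π ∈ 𝒞 and x ∈ ℝ set m_π(x) = ∫₀¹ (exp(α(λ(u(x) − πβ(x)) + (1−λ)(u'(x) − πβ(x)))) − 1) dλ. Define γ(x) = sup_{π ∈ 𝒞} m_π(x) if u(x) ≥ u'(x) and γ(x) = inf_{π ∈ 𝒞} m_π(x) if u(x) < u'(x). Then: (a) for every π ∈ 𝒞 and every x, g_α(u(x) − πβ(x)) − g_α(u'(x) − πβ(x)) ≤ γ(x)·(u(x) − u'(x)); and (b) if the function x ↦ γ(x)·(u(x) − u'(x)) is n-integrable, then for every z ∈ ℝ, f(z, u) − f(z, u') ≤ ∫ γ(x)·(u(x) − u'(x)) dn(x). -/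

import Mathlib

open MeasureTheory

/-- `g α y = (exp(α y) − α y − 1)/α`. -/
noncomputable def g (α y : ℝ) : ℝ := (Real.exp (α * y) - α * y - 1) / α

/-- `u ∈ L²(n) ∩ L^∞(n)`: measurable, square integrable and essentially bounded. -/
def MemL2Linf (n : Measure ℝ) (u : ℝ → ℝ) : Prop :=
  Measurable u ∧ Integrable (fun x => (u x) ^ 2) n ∧ ∃ K : ℝ, ∀ᵐ x ∂n, |u x| ≤ K

/-- The generator
`f(z,u) = inf_{π ∈ 𝒞} [ (α/2)(πσ − (z + θ/α))² + ∫ g_α(u(x) − πβ(x)) dn(x) ] − θz − θ²/(2α)`. -/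
noncomputable def gen (α θ σ : ℝ) (β : ℝ → ℝ) (𝒞 : Set ℝ) (n : Measure ℝ)
    (z : ℝ) (u : ℝ → ℝ) : ℝ :=
  sInf ((fun π => α / 2 * (π * σ - (z + θ / α)) ^ 2
      + ∫ x, g α (u x - π * β x) ∂n) '' 𝒞) - θ * z - θ ^ 2 / (2 * α)

lemma key (α : ℝ) (hα : 0 < α) (a b : ℝ) :
    g α a - g α b =
    (∫ l in (0:ℝ)..1, (Real.exp (α * (l * a + (1 - l) * b)) - 1)) * (a - b) := by
  have hφ : ∀ l : ℝ, HasDerivAt (fun l : ℝ => l * a + (1 - l) * b) (a - b) l := by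
    intro l
    have h := ((hasDerivAt_id l).mul_const a).add
      (((hasDerivAt_const l (1:ℝ)).sub (hasDerivAt_id l)).mul_const b)
    refine HasDerivAt.congr_deriv h ?_
    ring
  have hder : ∀ l : ℝ, HasDerivAt (fun l : ℝ => g α (l * a + (1 - l) * b))
      ((Real.exp (α * (l * a + (1 - l) * b)) - 1) * (a - b)) l := by
    intro l
    have hexp : HasDerivAt (fun l : ℝ => Real.exp (α * (l * a + (1 - l) * b)))
        (Real.exp (α * (l * a + (1 - l) * b)) * (α * (a - b))) l := ((hφ l).const_mul α).exp
    have h := ((hexp.sub ((hφ l).const_mul α)).sub_const 1).div_const α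
    refine HasDerivAt.congr_deriv h ?_
    field_simp
  have hcont : Continuous fun l : ℝ => (Real.exp (α * (l * a + (1 - l) * b)) - 1) * (a - b) := by
    fun_prop
  have hint := intervalIntegral.integral_eq_sub_of_hasDerivAt
    (fun l _ => hder l) (hcont.intervalIntegrable 0 1)
  rw [intervalIntegral.integral_mul_const] at hint
  rw [hint]
  norm_num

lemma m_formula (α A A' B π : ℝ) :
    (∫ l in (0:ℝ)..1, (Real.exp (α * (l * (A - π * B) + (1 - l) * (A' - π * B))) - 1)) =
    Real.exp (-(α * B) * π) * (∫ l in (0:ℝ)..1, Real.exp (α * (l * A + (1 - l) * A'))) - 1 := by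
  have hpt : ∀ l : ℝ, Real.exp (α * (l * (A - π * B) + (1 - l) * (A' - π * B))) - 1
      = Real.exp (-(α * B) * π) * Real.exp (α * (l * A + (1 - l) * A')) - 1 := by
    intro l
    rw [← Real.exp_add]
    congr 2
    ring
  simp_rw [hpt]
  have hc : Continuous fun l : ℝ =>
      Real.exp (-(α * B) * π) * Real.exp (α * (l * A + (1 - l) * A')) := by fun_prop
  rw [intervalIntegral.integral_sub (hc.intervalIntegrable 0 1)
    (intervalIntegrable_const), intervalIntegral.integral_const_mul,
    intervalIntegral.integral_const]
  norm_num

lemma g_nonneg {α : ℝ} (hα : 0 < α) (y : ℝ) : 0 ≤ g α y :=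
  div_nonneg (by nlinarith [Real.add_one_le_exp (α * y)]) hα.le

lemma exp_quad (t : ℝ) : Real.exp t - t - 1 ≤ t^2 * Real.exp |t| := by
  have h1 := Real.add_one_le_exp t
  have h2 := Real.add_one_le_exp (-t)
  have hmul : (1 - t) * Real.exp t ≤ 1 := by
    have := mul_le_mul_of_nonneg_right h2 (Real.exp_pos t).le
    rw [← Real.exp_add, neg_add_cancel, Real.exp_zero] at this; linarith [this]
  rcases abs_cases t with ⟨h, ht⟩ | ⟨h, ht⟩ <;> rw [h]
  · nlinarith [Real.exp_pos t, mul_le_mul_of_nonneg_left hmul ht]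
  · have hone : (1:ℝ) ≤ Real.exp (-t) := Real.one_le_exp (by linarith)
    nlinarith [Real.exp_pos t, sq_nonneg t, mul_le_mul_of_nonpos_left h1 ht.le]

lemma integrable_g {α : ℝ} (hα : 0 < α) {n : Measure ℝ} {u β : ℝ → ℝ}
    (hu : MemL2Linf n u) (hβ : MemL2Linf n β) (π : ℝ) :
    Integrable (fun x => g α (u x - π * β x)) n := by
  obtain ⟨Ku, hKu⟩ := hu.2.2
  obtain ⟨Kβ, hKβ⟩ := hβ.2.2
  set K := Ku + |π| * Kβ with hK
  have hB : Integrable (fun x => α * Real.exp (α * K) * (2 * u x ^ 2 + 2 * π ^ 2 * β x ^ 2)) n :=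
    (((hu.2.1.const_mul 2).add (hβ.2.1.const_mul (2 * π ^ 2))).const_mul _)
  refine hB.mono' ?_ ?_
  · apply Measurable.aestronglyMeasurable
    unfold g
    exact ((Real.measurable_exp.comp ((hu.1.sub (hβ.1.const_mul π)).const_mul α)).sub
      ((hu.1.sub (hβ.1.const_mul π)).const_mul α)).sub_const 1 |>.div_const α
  · filter_upwards [hKu, hKβ] with x h1 h2
    set v := u x - π * β x with hv
    have hvb : |v| ≤ K := by
      calc |v| ≤ |u x| + |π * β x| := abs_sub _ _
        _ ≤ Ku + |π| * Kβ := by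
            rw [abs_mul]
            gcongr
    have hg0 : 0 ≤ g α v := g_nonneg hα v
    rw [Real.norm_eq_abs, abs_of_nonneg hg0]
    have hq := exp_quad (α * v)
    have hexple : Real.exp |α * v| ≤ Real.exp (α * K) := by
      apply Real.exp_le_exp.2
      rw [abs_mul, abs_of_pos hα]
      exact mul_le_mul_of_nonneg_left hvb hα.le
    have hv2 : v ^ 2 ≤ 2 * u x ^ 2 + 2 * π ^ 2 * β x ^ 2 := by
      rw [hv]; nlinarith [sq_nonneg (u x + π * β x)]
    have hgle : g α v ≤ α * Real.exp (α * K) * v ^ 2 := by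
      rw [g, div_le_iff₀ hα]
      calc Real.exp (α * v) - α * v - 1 ≤ (α * v) ^ 2 * Real.exp |α * v| := hq
        _ ≤ (α * v) ^ 2 * Real.exp (α * K) := by gcongr
        _ = α * Real.exp (α * K) * v ^ 2 * α := by ring
    calc g α v ≤ α * Real.exp (α * K) * v ^ 2 := hgle
      _ ≤ α * Real.exp (α * K) * (2 * u x ^ 2 + 2 * π ^ 2 * β x ^ 2) := by
          apply mul_le_mul_of_nonneg_left hv2
          positivity

theorem stmt10 (α θ σ : ℝ) (hα : 0 < α) (n : Measure ℝ) [SigmaFinite n]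
    (β : ℝ → ℝ) (hβ : MemL2Linf n β)
    (𝒞 : Set ℝ) (h𝒞c : IsCompact 𝒞) (h𝒞ne : 𝒞.Nonempty) (h𝒞0 : (0:ℝ) ∈ 𝒞)
    (u u' : ℝ → ℝ) (hu : MemL2Linf n u) (hu' : MemL2Linf n u')
    (m : ℝ → ℝ → ℝ)
    (hm : ∀ π x, m π x =
      ∫ l in (0:ℝ)..1,
        (Real.exp (α * (l * (u x - π * β x) + (1 - l) * (u' x - π * β x))) - 1))
    (γ : ℝ → ℝ)
    (hγ : ∀ x, γ x =
      if u' x ≤ u x then sSup ((fun π => m π x) '' 𝒞)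
      else sInf ((fun π => m π x) '' 𝒞)) :
    (∀ π ∈ 𝒞, ∀ x : ℝ,
      g α (u x - π * β x) - g α (u' x - π * β x) ≤ γ x * (u x - u' x)) ∧
    (Integrable (fun x => γ x * (u x - u' x)) n →
      ∀ z : ℝ, gen α θ σ β 𝒞 n z u - gen α θ σ β 𝒞 n z u' ≤
        ∫ x, γ x * (u x - u' x) ∂n) := by
  have hA : ∀ π ∈ 𝒞, ∀ x : ℝ,
      g α (u x - π * β x) - g α (u' x - π * β x) ≤ γ x * (u x - u' x) := by
    intro π hπ x
    have hsub : (u x - π * β x) - (u' x - π * β x) = u x - u' x := by ring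
    have hid : g α (u x - π * β x) - g α (u' x - π * β x) = m π x * (u x - u' x) := by
      rw [key α hα, hsub, ← hm π x]
    have hmc : Continuous fun π : ℝ => m π x := by
      have heq : (fun π : ℝ => m π x) = fun π : ℝ =>
          Real.exp (-(α * β x) * π) *
            (∫ l in (0:ℝ)..1, Real.exp (α * (l * u x + (1 - l) * u' x))) - 1 := by
        funext π
        rw [hm π x, m_formula]
      rw [heq]
      fun_prop
    rcases le_or_gt (u' x) (u x) with hle | hlt
    · rw [hγ x, if_pos hle, hid]
      exact mul_le_mul_of_nonneg_right
        (le_csSup (h𝒞c.image hmc).bddAbove (Set.mem_image_of_mem _ hπ)) (by linarith)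
    · rw [hγ x, if_neg (not_le.2 hlt), hid]
      exact mul_le_mul_of_nonpos_right
        (csInf_le (h𝒞c.image hmc).bddBelow (Set.mem_image_of_mem _ hπ)) (by linarith)
  refine ⟨hA, ?_⟩
  intro hint z
  set I := ∫ x, γ x * (u x - u' x) ∂n with hI
  have hkey : ∀ π ∈ 𝒞, (∫ x, g α (u x - π * β x) ∂n) ≤
      (∫ x, g α (u' x - π * β x) ∂n) + I := by
    intro π hπ
    have hi' : Integrable (fun x => g α (u' x - π * β x)) n := integrable_g hα hu' hβ π
    have hle : ∀ x, g α (u x - π * β x) ≤ g α (u' x - π * β x) + γ x * (u x - u' x) :=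
      fun x => by linarith [hA π hπ x]
    have h := integral_mono_of_nonneg
      (Filter.Eventually.of_forall fun x => g_nonneg hα _)
      (hi'.add hint) (Filter.Eventually.of_forall hle)
    simp only [Pi.add_apply] at h
    rwa [integral_add hi' hint] at h
  simp only [gen]
  set Su := (fun π => α / 2 * (π * σ - (z + θ / α)) ^ 2
      + ∫ x, g α (u x - π * β x) ∂n) '' 𝒞 with hSu
  set Su' := (fun π => α / 2 * (π * σ - (z + θ / α)) ^ 2
      + ∫ x, g α (u' x - π * β x) ∂n) '' 𝒞 with hSu'
  have hS'ne : Su'.Nonempty := h𝒞ne.image _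
  have hbdd : BddBelow Su := by
    refine ⟨0, ?_⟩
    rintro y ⟨π, hπ, rfl⟩
    have h1 : 0 ≤ α / 2 * (π * σ - (z + θ / α)) ^ 2 := by positivity
    have h2 : 0 ≤ ∫ x, g α (u x - π * β x) ∂n := integral_nonneg fun x => g_nonneg hα _
    simp only []
    linarith
  have hmain : sInf Su ≤ sInf Su' + I := by
    rw [← sub_le_iff_le_add]
    apply le_csInf hS'ne
    rintro b ⟨π, hπ, rfl⟩
    have h1 : sInf Su ≤ α / 2 * (π * σ - (z + θ / α)) ^ 2 + ∫ x, g α (u x - π * β x) ∂n :=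
      csInf_le hbdd (Set.mem_image_of_mem _ hπ)
    have h2 := hkey π hπ
    simp only []
    linarith
  linarith
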